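/- Let F : ℝ → ℝ be C⁴ and define u(x,t) = −1/2 + F(x)/t for t > 0. Then u satisfies u_t + u_x + (u²)_x + u_xxxxt = 0 on ℝ × (0,∞) if and only if F⁽⁴⁾ − (F²)' + F = 0 on ℝ. -/

import Mathlib

private lemma iter4_aux (F : ℝ → ℝ) (hF : ContDiff ℝ 4 F) (s x : ℝ) :
    iteratedDeriv 4 (fun y => -(1 / 2) + F y / s) x = iteratedDeriv 4 F x / s := by
  have h1 : (fun y => -(1 / 2 : ℝ) + F y / s) = fun y => -(1 / 2 : ℝ) + s⁻¹ * F y := by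
    funext y; ring
  rw [h1, ← iteratedDerivWithin_univ, ← iteratedDerivWithin_univ,
    iteratedDerivWithin_const_add (by norm_num),
    iteratedDerivWithin_const_mul (Set.mem_univ x) uniqueDiffOn_univ s⁻¹ hF.contDiffWithinAt,
    div_eq_inv_mul]

private lemma pde_aux (F : ℝ → ℝ) (hF : ContDiff ℝ 4 F) (x t : ℝ) (ht : 0 < t) :
    deriv (fun s => -(1 / 2) + F x / s) t
      + deriv (fun y => -(1 / 2) + F y / t) x
      + deriv (fun y => (-(1 / 2) + F y / t) ^ 2) x
      + deriv (fun s => iteratedDeriv 4 (fun y => -(1 / 2) + F y / s) x) t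
    = -(iteratedDeriv 4 F x - 2 * F x * deriv F x + F x) / t ^ 2 := by
  have ht' : t ≠ 0 := ht.ne'
  have hFd : DifferentiableAt ℝ F x := (hF.differentiable (by norm_num)).differentiableAt
  have hA : deriv (fun s => -(1 / 2 : ℝ) + F x / s) t = -(F x / t ^ 2) := by
    have : HasDerivAt (fun s : ℝ => -(1 / 2 : ℝ) + F x / s) (-(F x / t ^ 2)) t := by
      have := ((hasDerivAt_inv ht').const_mul (F x)).const_add (-(1 / 2 : ℝ))
      simpa [div_eq_mul_inv, mul_comm, neg_div, mul_div_assoc] using this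
    exact this.deriv
  have hBd : HasDerivAt (fun y => -(1 / 2 : ℝ) + F y / t) (deriv F x / t) x :=
    (hFd.hasDerivAt.div_const t).const_add _
  have hB : deriv (fun y => -(1 / 2 : ℝ) + F y / t) x = deriv F x / t := hBd.deriv
  have hC : deriv (fun y => (-(1 / 2 : ℝ) + F y / t) ^ 2) x
      = 2 * (-(1 / 2) + F x / t) * (deriv F x / t) := by
    have := hBd.fun_pow 2
    simpa [mul_comm, mul_assoc] using this.deriv
  have hD : deriv (fun s => iteratedDeriv 4 (fun y => -(1 / 2 : ℝ) + F y / s) x) t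
      = -(iteratedDeriv 4 F x / t ^ 2) := by
    have heq : (fun s => iteratedDeriv 4 (fun y => -(1 / 2 : ℝ) + F y / s) x)
        = fun s => iteratedDeriv 4 F x / s := by
      funext s; exact iter4_aux F hF s x
    rw [heq]
    have : HasDerivAt (fun s : ℝ => iteratedDeriv 4 F x / s)
        (-(iteratedDeriv 4 F x / t ^ 2)) t := by
      have := (hasDerivAt_inv ht').const_mul (iteratedDeriv 4 F x)
      simpa [div_eq_mul_inv, mul_comm, neg_div, mul_div_assoc] using this
    exact this.deriv
  rw [hA, hB, hC, hD]
  field_simp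
  ring

theorem rosenau_reduction_scaling
    (F : ℝ → ℝ) (hF : ContDiff ℝ 4 F) :
    (∀ x t : ℝ, 0 < t →
      (letI u : ℝ → ℝ → ℝ := fun x t => -(1 / 2) + F x / t
      deriv (fun s => u x s) t
        + deriv (fun y => u y t) x
        + deriv (fun y => (u y t) ^ 2) x
        + deriv (fun s => iteratedDeriv 4 (fun y => u y s) x) t = 0))
    ↔ (∀ x : ℝ, iteratedDeriv 4 F x - deriv (fun y => (F y) ^ 2) x + F x = 0) := by
  have hsq : ∀ x : ℝ, deriv (fun y => (F y) ^ 2) x = 2 * F x * deriv F x := by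
    intro x
    have hFd : DifferentiableAt ℝ F x := (hF.differentiable (by norm_num)).differentiableAt
    have := (hFd.hasDerivAt.fun_pow 2).deriv
    simpa [mul_comm, mul_assoc] using this
  constructor
  · intro h x
    have := h x 1 one_pos
    rw [pde_aux F hF x 1 one_pos] at this
    have h2 : iteratedDeriv 4 F x - 2 * F x * deriv F x + F x = 0 := by
      have := this
      field_simp at this
      linarith
    rw [hsq x]; linarith
  · intro h x t ht
    rw [pde_aux F hF x t ht]
    have := h x
    rw [hsq x] at this
    rw [show iteratedDeriv 4 F x - 2 * F x * deriv F x + F x = 0 from by linarith]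
    simp
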